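/- Let k ∈ ℕ, k ≥ 1, and let ν, τ₁, τ₂ : ℝ → ℝ be continuous with c₁ ≤ ν ≤ c₂, 0 ≤ τ₁, τ₂ ≤ c₀ and τ₁(e)τ₂(e) = 0 for all e. Define Sᵏ(D, e) = min{k + 2ν(e), (2ν(e)(|D| − τ₁(e))⁺ + τ₂(e))/|D|} · D for D ≠ 0 and Sᵏ(0, e) = 0. Then for each fixed e, the map D ↦ Sᵏ(D, e) is monotone: (Sᵏ(D, e) − Sᵏ(D', e)) · (D − D') ≥ 0 for all D, D' ∈ ℝ^{3×3}. -/

import Mathlib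

/-- Frobenius inner product on 3×3 real matrices. -/
noncomputable def Mdot (A B : Matrix (Fin 3) (Fin 3) ℝ) : ℝ := ∑ i, ∑ j, A i j * B i j

/-- Frobenius norm. -/
noncomputable def Mnorm (A : Matrix (Fin 3) (Fin 3) ℝ) : ℝ := Real.sqrt (Mdot A A)

/-- The approximate stress Sᵏ(D, e) = min{k + 2ν(e), (2ν(e)(|D| − τ₁(e))⁺ + τ₂(e))/|D|}·D,
with Sᵏ(0, e) = 0. -/
noncomputable def Sk (k : ℕ) (ν τ₁ τ₂ : ℝ → ℝ) (D : Matrix (Fin 3) (Fin 3) ℝ) (e : ℝ) :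
    Matrix (Fin 3) (Fin 3) ℝ :=
  if D = 0 then 0
  else min ((k : ℝ) + 2 * ν e) ((2 * ν e * max (Mnorm D - τ₁ e) 0 + τ₂ e) / Mnorm D) • D

lemma Mdot_self_nonneg (A : Matrix (Fin 3) (Fin 3) ℝ) : 0 ≤ Mdot A A := by
  unfold Mdot
  exact Finset.sum_nonneg fun i _ => Finset.sum_nonneg fun j _ => mul_self_nonneg _

lemma Mnorm_sq (A : Matrix (Fin 3) (Fin 3) ℝ) : Mnorm A * Mnorm A = Mdot A A := by
  unfold Mnorm
  exact Real.mul_self_sqrt (Mdot_self_nonneg A)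

lemma Mnorm_nonneg (A : Matrix (Fin 3) (Fin 3) ℝ) : 0 ≤ Mnorm A := Real.sqrt_nonneg _

lemma Mnorm_pos {A : Matrix (Fin 3) (Fin 3) ℝ} (hA : A ≠ 0) : 0 < Mnorm A := by
  rcases (Mnorm_nonneg A).lt_or_eq with h | h
  · exact h
  exfalso
  apply hA
  have h0 : Mdot A A = 0 := by rw [← Mnorm_sq, ← h, mul_zero]
  have := (Finset.sum_eq_zero_iff_of_nonneg
    (fun i _ => Finset.sum_nonneg fun j _ => mul_self_nonneg (A i j))).1 h0
  ext i j
  have := (Finset.sum_eq_zero_iff_of_nonneg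
      (fun j _ => mul_self_nonneg (A i j))).1 (this i (Finset.mem_univ i)) j (Finset.mem_univ j)
  have := mul_self_eq_zero.1 this
  simpa using this

lemma Mdot_cauchy (A B : Matrix (Fin 3) (Fin 3) ℝ) : Mdot A B ≤ Mnorm A * Mnorm B := by
  have key : Mdot A B ^ 2 ≤ Mdot A A * Mdot B B := by
    have h := Finset.sum_mul_sq_le_sq_mul_sq Finset.univ
      (fun p : Fin 3 × Fin 3 => A p.1 p.2) (fun p : Fin 3 × Fin 3 => B p.1 p.2)
    simpa [Mdot, Fintype.sum_prod_type, sq] using h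
  calc Mdot A B ≤ |Mdot A B| := le_abs_self _
    _ = Real.sqrt (Mdot A B ^ 2) := (Real.sqrt_sq_eq_abs _).symm
    _ ≤ Real.sqrt (Mdot A A * Mdot B B) := Real.sqrt_le_sqrt key
    _ = Mnorm A * Mnorm B := by
        rw [Real.sqrt_mul (Mdot_self_nonneg A)]; rfl

lemma Mdot_expand (c c' : ℝ) (D D' : Matrix (Fin 3) (Fin 3) ℝ) :
    Mdot (c • D - c' • D') (D - D') =
      c * Mdot D D - (c + c') * Mdot D D' + c' * Mdot D' D' := by
  have hsym : Mdot D' D = Mdot D D' := by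
    unfold Mdot
    exact Finset.sum_congr rfl fun i _ => Finset.sum_congr rfl fun j _ => mul_comm _ _
  unfold Mdot at *
  simp only [Matrix.sub_apply, Matrix.smul_apply, smul_eq_mul]
  rw [← hsym]
  simp only [Finset.mul_sum, ← Finset.sum_sub_distrib, ← Finset.sum_add_distrib]
  exact Finset.sum_congr rfl fun i _ => Finset.sum_congr rfl fun j _ => by ring

theorem stmt7 (k : ℕ) (hk : 1 ≤ k) (c₀ c₁ c₂ : ℝ) (hc₀ : 0 < c₀) (hc₁ : 0 < c₁) (hc₂ : 0 < c₂)
    (ν τ₁ τ₂ : ℝ → ℝ) (hνc : Continuous ν) (hτ₁c : Continuous τ₁) (hτ₂c : Continuous τ₂)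
    (hν : ∀ e, c₁ ≤ ν e ∧ ν e ≤ c₂)
    (hτ₁ : ∀ e, 0 ≤ τ₁ e ∧ τ₁ e ≤ c₀) (hτ₂ : ∀ e, 0 ≤ τ₂ e ∧ τ₂ e ≤ c₀)
    (hcomp : ∀ e, τ₁ e * τ₂ e = 0) :
    ∀ (e : ℝ) (D D' : Matrix (Fin 3) (Fin 3) ℝ),
      0 ≤ Mdot (Sk k ν τ₁ τ₂ D e - Sk k ν τ₁ τ₂ D' e) (D - D') := by
  intro e D D'
  have hνe : (0:ℝ) < ν e := lt_of_lt_of_le hc₁ (hν e).1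
  have hp : (0:ℝ) < (k : ℝ) + 2 * ν e := by positivity
  have hτ₂e : 0 ≤ τ₂ e := (hτ₂ e).1
  -- the coefficient function and bounds
  set p : ℝ := (k : ℝ) + 2 * ν e with hp_def
  have hnum : ∀ r : ℝ, 0 ≤ 2 * ν e * max (r - τ₁ e) 0 + τ₂ e := by
    intro r; positivity
  have hg_nonneg : ∀ (A : Matrix (Fin 3) (Fin 3) ℝ),
      0 ≤ min p ((2 * ν e * max (Mnorm A - τ₁ e) 0 + τ₂ e) / Mnorm A) → True := fun _ _ => trivial
  by_cases hD : D = 0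
  · by_cases hD' : D' = 0
    · simp [Sk, hD, hD', Mdot]
    · -- D = 0, D' ≠ 0
      set c' := min p ((2 * ν e * max (Mnorm D' - τ₁ e) 0 + τ₂ e) / Mnorm D') with hc'
      have hc'0 : 0 ≤ c' :=
        le_min hp.le (div_nonneg (hnum _) (Mnorm_nonneg _))
      have : Mdot (Sk k ν τ₁ τ₂ D e - Sk k ν τ₁ τ₂ D' e) (D - D')
          = Mdot ((0:ℝ) • D - c' • D') (D - D') := by
        simp [Sk, hD, hD', hc', hp_def]
      rw [this, Mdot_expand]
      have := Mnorm_sq D'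
      have hD0 : Mdot D D = 0 := by simp [hD, Mdot]
      have hDD' : Mdot D D' = 0 := by simp [hD, Mdot]
      rw [hD0, hDD']
      have := Mdot_self_nonneg D'
      nlinarith
  · by_cases hD' : D' = 0
    · set c := min p ((2 * ν e * max (Mnorm D - τ₁ e) 0 + τ₂ e) / Mnorm D) with hc
      have hc0 : 0 ≤ c :=
        le_min hp.le (div_nonneg (hnum _) (Mnorm_nonneg _))
      have : Mdot (Sk k ν τ₁ τ₂ D e - Sk k ν τ₁ τ₂ D' e) (D - D')
          = Mdot (c • D - (0:ℝ) • D') (D - D') := by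
        simp [Sk, hD, hD', hc, hp_def]
      rw [this, Mdot_expand]
      have hD0 : Mdot D' D' = 0 := by simp [hD', Mdot]
      have hDD' : Mdot D D' = 0 := by simp [hD', Mdot]
      rw [hD0, hDD']
      have := Mdot_self_nonneg D
      nlinarith
    · -- both nonzero
      set a := Mnorm D with ha_def
      set b := Mnorm D' with hb_def
      have ha : 0 < a := Mnorm_pos hD
      have hb : 0 < b := Mnorm_pos hD'
      set c := min p ((2 * ν e * max (a - τ₁ e) 0 + τ₂ e) / a) with hc
      set c' := min p ((2 * ν e * max (b - τ₁ e) 0 + τ₂ e) / b) with hc'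
      have hc0 : 0 ≤ c := le_min hp.le (div_nonneg (hnum _) ha.le)
      have hc'0 : 0 ≤ c' := le_min hp.le (div_nonneg (hnum _) hb.le)
      have hca : c * a = min (p * a) (2 * ν e * max (a - τ₁ e) 0 + τ₂ e) := by
        rw [hc, min_mul_of_nonneg _ _ ha.le, div_mul_cancel₀ _ ha.ne']
      have hc'b : c' * b = min (p * b) (2 * ν e * max (b - τ₁ e) 0 + τ₂ e) := by
        rw [hc', min_mul_of_nonneg _ _ hb.le, div_mul_cancel₀ _ hb.ne']
      -- f(r) := min (p*r) (2ν(r-τ₁)⁺+τ₂) is monotone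
      have hmono : ∀ r s : ℝ, r ≤ s →
          min (p * r) (2 * ν e * max (r - τ₁ e) 0 + τ₂ e)
            ≤ min (p * s) (2 * ν e * max (s - τ₁ e) 0 + τ₂ e) := by
        intro r s hrs
        apply min_le_min
        · exact mul_le_mul_of_nonneg_left hrs hp.le
        · have : max (r - τ₁ e) 0 ≤ max (s - τ₁ e) 0 :=
            max_le_max (by linarith) le_rfl
          nlinarith
      have hkey : 0 ≤ (c * a - c' * b) * (a - b) := by
        rcases le_total a b with hab | hab
        · have h1 : c * a ≤ c' * b := by rw [hca, hc'b]; exact hmono a b hab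
          have := mul_nonneg (sub_nonneg.2 h1) (sub_nonneg.2 hab)
          nlinarith
        · have h1 : c' * b ≤ c * a := by rw [hca, hc'b]; exact hmono b a hab
          exact mul_nonneg (sub_nonneg.2 h1) (sub_nonneg.2 hab)
      have hcs : Mdot D D' ≤ a * b := Mdot_cauchy D D'
      have hSk : Mdot (Sk k ν τ₁ τ₂ D e - Sk k ν τ₁ τ₂ D' e) (D - D')
          = Mdot (c • D - c' • D') (D - D') := by
        simp [Sk, hD, hD', hc, hc', ha_def, hb_def, hp_def]
      rw [hSk, Mdot_expand]
      have h1 : Mdot D D = a * a := (Mnorm_sq D).symm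
      have h2 : Mdot D' D' = b * b := (Mnorm_sq D').symm
      rw [h1, h2]
      nlinarith [add_nonneg hc0 hc'0, mul_le_mul_of_nonneg_left hcs (add_nonneg hc0 hc'0)]
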